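/- Let I = (i_0, i_1, ..., i_f, 0, ...) be an admissible frame, and define j_k = i_{k-1} - i_{k-2} + i_{k-3} - ... ± i_0 - (1 + (-1)^k) (i.e., j_1 = i_0 - 2, j_2 = i_1 - i_0, j_3 = i_2 - i_1 + i_0 - 2, j_4 = i_3 - i_2 + i_1 - i_0, alternating). Then the number of Dyck paths having frame I equals the product C(i_1 - 1, i_1 - j_1 - 1) · C(i_2 - 1, i_2 - j_2 - 1) ··· C(i_f - 1, i_f - j_f - 1). -/

import Mathlib

/-- A step of a Dyck path: `true` = up step (1,1), `false` = down step (1,-1). -/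
def dstep (b : Bool) : ℤ := if b then 1 else -1

/-- Height of the path after its first `k` steps. -/
def dheight (p : List Bool) (k : ℕ) : ℤ := ((p.take k).map dstep).sum

/-- A Dyck path: ends at height 0 and never goes below the x-axis. -/
def IsDyck (p : List Bool) : Prop :=
  (p.map dstep).sum = 0 ∧ ∀ k, 0 ≤ dheight p k

/-- Number of lattice points of the path at level `l` (its "feet" at level `l`). -/
def feet (p : List Bool) (l : ℤ) : ℕ :=
  ((List.range (p.length + 1)).map (dheight p)).count l

/-- The frame of a Dyck path: at position `k`, the number of its points at height `k`. -/
def frame (p : List Bool) : ℕ → ℕ := fun k => feet p (k : ℤ)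

/-- `DyckFeet m l j` = number of Dyck paths of length `m` with exactly `j` points at level `l`. -/
noncomputable def DyckFeet (m : ℕ) (l : ℤ) (j : ℕ) : ℕ :=
  Set.ncard {p : List Bool | p.length = m ∧ IsDyck p ∧ feet p l = j}

/-- A sequence is admissible if it is the frame of some Dyck path. -/
def Admissible (I : ℕ → ℕ) : Prop := ∃ p : List Bool, IsDyck p ∧ frame p = I

/-- j_1 = i_0 - 2, j_2 = i_1 - i_0, j_3 = i_2 - i_1 + i_0 - 2, j_4 = i_3 - i_2 + i_1 - i_0, ... -/
def jSeq (I : ℕ → ℕ) (k : ℕ) : ℤ :=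
  (∑ t ∈ Finset.range k, (-1) ^ (k - 1 - t) * (I t : ℤ)) - (if Even (k - 1) then 2 else 0)

/- ## heights list -/

def wsum (p : List Bool) : ℤ := (p.map dstep).sum

def hts (h : ℤ) : List Bool → List ℤ
  | [] => [h]
  | b :: q => h :: hts (h + dstep b) q

@[simp] lemma wsum_nil : wsum [] = 0 := rfl
@[simp] lemma wsum_cons (b : Bool) (q : List Bool) : wsum (b :: q) = dstep b + wsum q := by
  simp [wsum]
@[simp] lemma wsum_append (p q : List Bool) : wsum (p ++ q) = wsum p + wsum q := by
  simp [wsum]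

@[simp] lemma hts_nil (h : ℤ) : hts h [] = [h] := rfl
@[simp] lemma hts_cons (h : ℤ) (b : Bool) (q : List Bool) :
    hts h (b :: q) = h :: hts (h + dstep b) q := rfl

@[simp] lemma hts_ne_nil (h : ℤ) (p : List Bool) : hts h p ≠ [] := by
  cases p <;> simp [hts]

@[simp] lemma dheight_zero (p : List Bool) : dheight p 0 = 0 := rfl

lemma dheight_cons (b : Bool) (q : List Bool) (k : ℕ) :
    dheight (b :: q) (k + 1) = dstep b + dheight q k := by
  simp [dheight]

lemma hts_eq (p : List Bool) (h : ℤ) :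
    hts h p = (List.range (p.length + 1)).map (fun k => h + dheight p k) := by
  induction p generalizing h with
  | nil => simp [hts, dheight]
  | cons b q ih =>
    rw [hts_cons, ih, List.length_cons,
      show q.length + 1 + 1 = q.length + 1 + 1 from rfl,
      @List.range_succ_eq_map (q.length + 1)]
    simp only [List.map_cons, List.map_map, dheight_zero, add_zero]
    refine congrArg (h :: ·) ?_
    apply List.map_congr_left
    intro k _
    simp [Function.comp_def, dheight_cons, add_assoc]

lemma feet_eq_count (p : List Bool) (m : ℤ) : feet p m = (hts 0 p).count m := by
  rw [hts_eq, feet]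
  simp

lemma mem_hts_iff (p : List Bool) (h : ℤ) (x : ℤ) :
    x ∈ hts h p ↔ ∃ k ≤ p.length, x = h + dheight p k := by
  rw [hts_eq]
  simp only [List.mem_map, List.mem_range]
  constructor
  · rintro ⟨k, hk, rfl⟩; exact ⟨k, by omega, rfl⟩
  · rintro ⟨k, hk, rfl⟩; exact ⟨k, by omega, rfl⟩

lemma dheight_of_le (p : List Bool) (k : ℕ) (hk : p.length ≤ k) :
    dheight p k = wsum p := by
  unfold dheight wsum
  rw [List.take_of_length_le hk]

lemma wsum_eq (p : List Bool) : wsum p = dheight p p.length := by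
  rw [dheight_of_le p p.length le_rfl]

lemma isDyck_iff (p : List Bool) :
    IsDyck p ↔ wsum p = 0 ∧ ∀ x ∈ hts 0 p, 0 ≤ x := by
  constructor
  · rintro ⟨h1, h2⟩
    refine ⟨h1, ?_⟩
    intro x hx
    rw [mem_hts_iff] at hx
    obtain ⟨k, _, rfl⟩ := hx
    simpa using h2 k
  · rintro ⟨h1, h2⟩
    refine ⟨h1, ?_⟩
    intro k
    rcases le_or_gt k p.length with hk | hk
    · have := h2 (0 + dheight p k) ((mem_hts_iff p 0 _).2 ⟨k, hk, rfl⟩)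
      simpa using this
    · rw [dheight_of_le p k hk.le, wsum_eq]
      have := h2 (0 + dheight p p.length) ((mem_hts_iff p 0 _).2 ⟨p.length, le_rfl, rfl⟩)
      simpa using this

lemma mem_hts_self (h : ℤ) (p : List Bool) : h ∈ hts h p := by
  cases p <;> simp [hts]

lemma hts_last (h : ℤ) (p : List Bool) :
    hts h p = (hts h p).dropLast ++ [h + wsum p] := by
  induction p generalizing h with
  | nil => simp [hts]
  | cons b q ih =>
    rw [hts_cons, wsum_cons]
    conv_lhs => rw [ih]
    rw [List.dropLast_cons_of_ne_nil (by simp)]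
    simp [add_assoc]

lemma hts_append (p r : List Bool) (h : ℤ) :
    hts h (p ++ r) = (hts h p).dropLast ++ hts (h + wsum p) r := by
  induction p generalizing h with
  | nil => simp [hts]
  | cons b q ih =>
    rw [List.cons_append, hts_cons, hts_cons, ih]
    rw [List.dropLast_cons_of_ne_nil (by simp)]
    simp [add_assoc]

/- ## up/down step counts -/

def ups (m : ℤ) : ℤ → List Bool → ℕ
  | _, [] => 0
  | h, b :: q => (if h = m ∧ b = true then 1 else 0) + ups m (h + dstep b) q

def downs (m : ℤ) : ℤ → List Bool → ℕ
  | _, [] => 0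
  | h, b :: q => (if h = m ∧ b = false then 1 else 0) + downs m (h + dstep b) q

@[simp] lemma ups_nil (m h : ℤ) : ups m h [] = 0 := rfl
@[simp] lemma downs_nil (m h : ℤ) : downs m h [] = 0 := rfl
lemma ups_cons (m h : ℤ) (b : Bool) (q : List Bool) :
    ups m h (b :: q) = (if h = m ∧ b = true then 1 else 0) + ups m (h + dstep b) q := rfl
lemma downs_cons (m h : ℤ) (b : Bool) (q : List Bool) :
    downs m h (b :: q) = (if h = m ∧ b = false then 1 else 0) + downs m (h + dstep b) q := rfl

lemma count_hts (m : ℤ) : ∀ (p : List Bool) (h : ℤ),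
    (hts h p).count m = ups m h p + downs m h p + (if h + wsum p = m then 1 else 0)
  | [], h => by
    simp only [hts_nil, wsum_nil, add_zero, ups_nil, downs_nil, List.count_cons,
      List.count_nil, beq_iff_eq]
    try (split_ifs <;> omega)
  | b :: q, h => by
    rw [hts_cons, List.count_cons, count_hts m q (h + dstep b), ups_cons, downs_cons,
      wsum_cons]
    have h2 : h + (dstep b + wsum q) = h + dstep b + wsum q := by ring
    rw [h2]
    simp only [beq_iff_eq]
    cases b <;>
      simp only [dstep, if_true, if_false, and_true, and_false, Bool.true_eq_false,
        Bool.false_eq_true, ite_true, ite_false] <;>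
      split_ifs <;> omega

lemma crossing (m : ℤ) : ∀ (p : List Bool) (h : ℤ),
    (ups m h p : ℤ) - downs (m + 1) h p =
      (if h ≤ m ∧ m + 1 ≤ h + wsum p then 1 else 0)
      - (if h + wsum p ≤ m ∧ m + 1 ≤ h then 1 else 0)
  | [], h => by simp; try (split_ifs <;> omega)
  | b :: q, h => by
    rw [ups_cons, downs_cons, wsum_cons]
    have hq := crossing m q (h + dstep b)
    have h2 : h + (dstep b + wsum q) = h + dstep b + wsum q := by ring
    rw [h2]
    cases b <;>
      simp only [dstep, if_true, if_false, Bool.true_eq_false, Bool.false_eq_true,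
        and_true, and_false, ite_true, ite_false] at hq ⊢ <;>
      push_cast <;> split_ifs at hq ⊢ <;> omega

lemma ups_eq_zero_of_not_mem (m : ℤ) : ∀ (p : List Bool) (h : ℤ),
    m ∉ hts h p → ups m h p = 0
  | [], h => by simp
  | b :: q, h => by
    intro hm
    rw [hts_cons, List.mem_cons, not_or] at hm
    rw [ups_cons, ups_eq_zero_of_not_mem m q (h + dstep b) hm.2]
    simp only [add_zero]
    split_ifs with hh
    · exact hm.1 hh.1.symm
    · rfl

lemma ups_eq_zero_of_not_mem_succ (m : ℤ) : ∀ (p : List Bool) (h : ℤ),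
    (m + 1) ∉ hts h p → ups m h p = 0
  | [], h => by simp
  | b :: q, h => by
    intro hm
    rw [hts_cons, List.mem_cons, not_or] at hm
    rw [ups_cons, ups_eq_zero_of_not_mem_succ m q (h + dstep b) hm.2]
    simp only [add_zero]
    split_ifs with hh
    · exfalso
      apply hm.2
      have : h + dstep b = m + 1 := by rw [hh.1, hh.2]; simp [dstep]
      rw [this]
      exact mem_hts_self _ _
    · rfl

lemma ups_pos (m : ℤ) : ∀ (p : List Bool) (h : ℤ) (x : ℤ),
    h ≤ m → x ∈ hts h p → m < x → 0 < ups m h p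
  | [], h, x => by
    intro h1 h2 h3
    simp at h2
    omega
  | b :: q, h, x => by
    intro h1 h2 h3
    rw [hts_cons] at h2
    rcases List.mem_cons.1 h2 with rfl | hx
    · omega
    rw [ups_cons]
    by_cases hb : h = m ∧ b = true
    · simp [hb]
    · have : h + dstep b ≤ m := by
        cases b <;> simp [dstep] <;> simp at hb <;> omega
      have := ups_pos m q (h + dstep b) x this hx h3
      omega

/- ## jSeq -/

lemma jSeq_one (I : ℕ → ℕ) : jSeq I 1 = (I 0 : ℤ) - 2 := by
  simp [jSeq]

lemma jSeq_succ (I : ℕ → ℕ) (k : ℕ) (hk : 1 ≤ k) :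
    jSeq I (k + 1) = (I k : ℤ) - jSeq I k - 2 := by
  unfold jSeq
  rw [show k + 1 - 1 = k from rfl, Finset.sum_range_succ]
  have hs : ∀ t ∈ Finset.range k, (-1 : ℤ) ^ (k - t) * I t = -((-1) ^ (k - 1 - t) * I t) := by
    intro t ht
    rw [Finset.mem_range] at ht
    rw [show k - t = (k - 1 - t) + 1 by omega, pow_succ]
    ring
  rw [Finset.sum_congr rfl hs, Finset.sum_neg_distrib]
  have hpar : Even (k - 1) ↔ ¬ Even k := by
    rw [Nat.even_iff, Nat.even_iff]
    omega
  by_cases he : Even k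
  · rw [if_pos he, if_neg (by tauto), Nat.sub_self, pow_zero, one_mul]
    ring
  · rw [if_neg he, if_pos (hpar.2 he), Nat.sub_self, pow_zero, one_mul]
    ring

lemma jSeq_congr (I I' : ℕ → ℕ) (k : ℕ) (h : ∀ t < k, I t = I' t) :
    jSeq I k = jSeq I' k := by
  unfold jSeq
  congr 1
  apply Finset.sum_congr rfl
  intro t ht
  rw [Finset.mem_range] at ht
  rw [h t ht]

/- ## frame identities for Dyck paths -/

lemma dyck_nonneg_mem {p : List Bool} (hp : IsDyck p) {x : ℤ} (hx : x ∈ hts 0 p) : 0 ≤ x :=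
  ((isDyck_iff p).1 hp).2 x hx

lemma frame_eq_count (p : List Bool) (k : ℕ) : frame p k = (hts 0 p).count (k : ℤ) :=
  feet_eq_count p k

lemma frame_zero_eq {p : List Bool} (hp : IsDyck p) :
    (frame p 0 : ℤ) = ups 0 0 p + 1 := by
  have hw : wsum p = 0 := ((isDyck_iff p).1 hp).1
  have hc := count_hts (0 : ℤ) p 0
  have hcr := crossing (-1 : ℤ) p 0
  have hneg : ups (-1) 0 p = 0 := by
    apply ups_eq_zero_of_not_mem
    intro hmem
    exact absurd (dyck_nonneg_mem hp hmem) (by norm_num)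
  rw [frame_eq_count]
  rw [hw] at hc hcr
  rw [hneg] at hcr
  simp only [Nat.cast_zero] at *
  norm_num at hc hcr
  omega

lemma frame_succ_eq {p : List Bool} (hp : IsDyck p) (k : ℕ) :
    (frame p (k + 1) : ℤ) = ups ((k : ℤ) + 1) 0 p + ups (k : ℤ) 0 p := by
  have hw : wsum p = 0 := ((isDyck_iff p).1 hp).1
  have hc := count_hts ((k : ℤ) + 1) p 0
  have hcr := crossing (k : ℤ) p 0
  rw [hw] at hc hcr
  rw [frame_eq_count]
  push_cast
  rw [hc]
  split_ifs at hcr ⊢ <;> omega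

lemma jSeq_frame {p : List Bool} (hp : IsDyck p) (k : ℕ) :
    jSeq (frame p) (k + 1) = (ups (k : ℤ) 0 p : ℤ) - 1 := by
  induction k with
  | zero =>
    rw [jSeq_one, frame_zero_eq hp]
    push_cast
    ring
  | succ k ih =>
    rw [jSeq_succ _ _ (by omega), ih, frame_succ_eq hp k]
    push_cast
    ring

lemma toNat_term {p : List Bool} (hp : IsDyck p) (k : ℕ) :
    ((frame p (k + 1) : ℤ) - jSeq (frame p) (k + 1) - 1).toNat = ups ((k : ℤ) + 1) 0 p := by
  rw [jSeq_frame hp, frame_succ_eq hp]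
  omega

/- ## peaks and insertion -/

def pk : ℕ → List Bool
  | 0 => []
  | n + 1 => true :: false :: pk n

@[simp] lemma pk_zero : pk 0 = [] := rfl
@[simp] lemma pk_succ (n : ℕ) : pk (n + 1) = true :: false :: pk n := rfl

@[simp] lemma wsum_pk (n : ℕ) : wsum (pk n) = 0 := by
  induction n with
  | zero => simp
  | succ n ih => simp [dstep, ih]

@[simp] lemma pk_length (n : ℕ) : (pk n).length = 2 * n := by
  induction n with
  | zero => simp
  | succ n ih => simp [ih]; omega

lemma count_hts_pk (n : ℕ) (h m : ℤ) :
    (hts h (pk n)).count m = (if m = h then n + 1 else if m = h + 1 then n else 0) := by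
  induction n with
  | zero =>
    simp only [pk_zero, hts_nil, List.count_cons, List.count_nil, beq_iff_eq]
    split_ifs <;> omega
  | succ n ih =>
    rw [pk_succ, hts_cons, hts_cons]
    have e1 : h + dstep true = h + 1 := by simp [dstep]
    have e2 : h + dstep true + dstep false = h := by simp [dstep]
    rw [e1, e2] at *
    rw [List.count_cons, List.count_cons, ih]
    simp only [beq_iff_eq]
    split_ifs <;> omega

lemma count_dropLast_hts_pk (n : ℕ) (h m : ℤ) :
    ((hts h (pk n)).dropLast).count m = (if m = h then n else if m = h + 1 then n else 0) := by
  have h1 := hts_last h (pk n)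
  rw [wsum_pk, add_zero] at h1
  have h2 : (hts h (pk n)).count m = ((hts h (pk n)).dropLast).count m + [h].count m := by
    conv_lhs => rw [h1]
    rw [List.count_append]
  rw [count_hts_pk] at h2
  simp only [List.count_cons, List.count_nil, beq_iff_eq] at h2
  split_ifs at h2 ⊢ <;> omega

def ins (l : ℤ) : List ℕ → ℤ → List Bool → List Bool
  | cs, h, [] => if h = l then pk cs.headI else []
  | cs, h, b :: q =>
      if h = l then pk cs.headI ++ b :: ins l cs.tail (h + dstep b) q
      else b :: ins l cs (h + dstep b) q

lemma ins_nil (l : ℤ) (cs : List ℕ) (h : ℤ) :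
    ins l cs h [] = if h = l then pk cs.headI else [] := rfl
lemma ins_cons (l : ℤ) (cs : List ℕ) (h : ℤ) (b : Bool) (q : List Bool) :
    ins l cs h (b :: q) =
      if h = l then pk cs.headI ++ b :: ins l cs.tail (h + dstep b) q
      else b :: ins l cs (h + dstep b) q := rfl

lemma take_one_sum (cs : List ℕ) : (cs.take 1).sum = cs.headI := by
  cases cs <;> simp

lemma take_succ_sum (cs : List ℕ) (n : ℕ) :
    (cs.take (n + 1)).sum = cs.headI + (cs.tail.take n).sum := by
  cases cs <;> simp

lemma wsum_ins (l : ℤ) : ∀ (q : List Bool) (cs : List ℕ) (h : ℤ),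
    wsum (ins l cs h q) = wsum q
  | [], cs, h => by
    rw [ins_nil]
    split_ifs <;> simp
  | b :: q, cs, h => by
    rw [ins_cons]
    split_ifs with hl
    · rw [wsum_append]
      simp [wsum_ins l q cs.tail (h + dstep b)]
    · simp [wsum_ins l q cs (h + dstep b)]

lemma count_hts_ins (l : ℤ) : ∀ (q : List Bool) (cs : List ℕ) (h m : ℤ),
    (hts h (ins l cs h q)).count m
      = (hts h q).count m
        + (if m = l ∨ m = l + 1 then (cs.take ((hts h q).count l)).sum else 0)
  | [], cs, h, m => by
    rw [ins_nil]
    by_cases hl : h = l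
    · subst hl
      rw [if_pos rfl, count_hts_pk]
      simp only [hts_nil, List.count_cons, List.count_nil, beq_iff_eq, eq_self_iff_true,
        ite_true, zero_add]
      rw [take_one_sum]
      split_ifs <;> omega
    · rw [if_neg hl]
      simp only [hts_nil, List.count_cons, List.count_nil, beq_iff_eq, hl, ite_false,
        List.take_zero, List.sum_nil, ite_self, add_zero, zero_add]
  | b :: q, cs, h, m => by
    rw [ins_cons]
    by_cases hl : h = l
    · subst hl
      rw [if_pos rfl]
      have happ : hts h (pk cs.headI ++ b :: ins h cs.tail (h + dstep b) q)
          = (hts h (pk cs.headI)).dropLast ++ hts h (b :: ins h cs.tail (h + dstep b) q) := by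
        rw [hts_append, wsum_pk, add_zero]
      rw [happ, List.count_append, hts_cons, List.count_cons,
        count_hts_ins h q cs.tail (h + dstep b) m, count_dropLast_hts_pk]
      rw [show ((hts h (b :: q)).count h) = ((hts (h + dstep b) q).count h + 1) from by
        rw [hts_cons, List.count_cons]; simp]
      rw [hts_cons, List.count_cons, take_succ_sum]
      simp only [beq_iff_eq]
      split_ifs <;> omega
    · rw [if_neg hl]
      simp only [hts_cons, List.count_cons, beq_iff_eq, hl, ite_false, add_zero]
      rw [count_hts_ins l q cs (h + dstep b) m]
      split_ifs <;> omega

/- ## injectivity of insertion -/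

lemma pk_inj {a a' : ℕ} (h : pk a = pk a') : a = a' := by
  have := congrArg List.length h
  simp at this
  omega

lemma pk_ne_append : ∀ (a a' : ℕ) (t : List Bool), pk a ≠ pk a' ++ false :: t
  | 0, a', t => by cases a' <;> simp
  | a + 1, 0, t => by simp
  | a + 1, a' + 1, t => by
    intro hh
    simp only [pk_succ, List.cons_append, List.cons.injEq, true_and] at hh
    exact pk_ne_append a a' t hh

lemma pk_append_inj : ∀ (a a' : ℕ) (X X' : List Bool),
    pk a ++ false :: X = pk a' ++ false :: X' → a = a' ∧ X = X'
  | 0, 0, X, X' => by simp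
  | 0, a' + 1, X, X' => by simp
  | a + 1, 0, X, X' => by simp
  | a + 1, a' + 1, X, X' => by
    intro hh
    simp only [pk_succ, List.cons_append, List.cons.injEq, true_and] at hh
    have := pk_append_inj a a' X X' hh
    exact ⟨by omega, this.2⟩

lemma bound_step_down {l h : ℤ} {b : Bool} {q : List Bool}
    (hb : ∀ x ∈ hts h (b :: q), x ≤ l) (hl : h = l) : b = false := by
  cases b
  · rfl
  · exfalso
    have := hb (h + dstep true) (List.mem_cons_of_mem _ (mem_hts_self _ _))
    simp [dstep] at this
    omega

lemma ins_inj (l : ℤ) : ∀ (q q' : List Bool) (cs cs' : List ℕ) (h : ℤ),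
    (∀ x ∈ hts h q, x ≤ l) → (∀ x ∈ hts h q', x ≤ l) →
    cs.length = (hts h q).count l → cs'.length = (hts h q').count l →
    ins l cs h q = ins l cs' h q' → q = q' ∧ cs = cs'
  | [], [], cs, cs', h => by
    intro _ _ hlen hlen' heq
    refine ⟨rfl, ?_⟩
    by_cases hl : h = l
    · subst hl
      rw [ins_nil, ins_nil, if_pos rfl, if_pos rfl] at heq
      have hcs : (hts h ([] : List Bool)).count h = 1 := by
        simp [List.count_cons]
      rw [hcs] at hlen hlen'
      rcases cs with _ | ⟨c, t⟩ <;> rcases cs' with _ | ⟨c', t'⟩ <;> simp_all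
      have := pk_inj heq
      subst this
      simp
    · rw [ins_nil, ins_nil, if_neg hl, if_neg hl] at heq
      have hcs : (hts h ([] : List Bool)).count l = 0 := by
        simp [List.count_cons, hl]
      rw [hcs] at hlen hlen'
      rw [List.length_eq_zero_iff] at hlen hlen'
      rw [hlen, hlen']
  | [], b' :: r', cs, cs', h => by
    intro hbd hbd' hlen hlen' heq
    exfalso
    by_cases hl : h = l
    · have hb' : b' = false := bound_step_down hbd' hl
      subst hb'
      rw [ins_nil, ins_cons, if_pos hl, if_pos hl] at heq
      exact pk_ne_append _ _ _ heq
    · rw [ins_nil, ins_cons, if_neg hl, if_neg hl] at heq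
      simp at heq
  | b :: r, [], cs, cs', h => by
    intro hbd hbd' hlen hlen' heq
    exfalso
    by_cases hl : h = l
    · have hb : b = false := bound_step_down hbd hl
      subst hb
      rw [ins_nil, ins_cons, if_pos hl, if_pos hl] at heq
      exact pk_ne_append _ _ _ heq.symm
    · rw [ins_nil, ins_cons, if_neg hl, if_neg hl] at heq
      simp at heq
  | b :: r, b' :: r', cs, cs', h => by
    intro hbd hbd' hlen hlen' heq
    have hsub : ∀ x ∈ hts (h + dstep b) r, x ≤ l := fun x hx =>
      hbd x (by rw [hts_cons]; exact List.mem_cons_of_mem _ hx)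
    have hsub' : ∀ x ∈ hts (h + dstep b') r', x ≤ l := fun x hx =>
      hbd' x (by rw [hts_cons]; exact List.mem_cons_of_mem _ hx)
    by_cases hl : h = l
    · have hb : b = false := bound_step_down hbd hl
      have hb' : b' = false := bound_step_down hbd' hl
      subst hb hb'
      rw [ins_cons, ins_cons, if_pos hl, if_pos hl] at heq
      obtain ⟨hhead, htail⟩ := pk_append_inj _ _ _ _ heq
      have hcnt : (hts h (false :: r)).count l = (hts (h + dstep false) r).count l + 1 := by
        rw [hts_cons, List.count_cons]
        simp [hl]
      have hcnt' : (hts h (false :: r')).count l = (hts (h + dstep false) r').count l + 1 := by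
        rw [hts_cons, List.count_cons]
        simp [hl]
      rw [hcnt] at hlen
      rw [hcnt'] at hlen'
      rcases cs with _ | ⟨c, t⟩
      · simp at hlen
      rcases cs' with _ | ⟨c', t'⟩
      · simp at hlen'
      simp only [List.headI, List.tail] at hhead htail ⊢
      obtain ⟨hr, ht⟩ := ins_inj l r r' t t' (h + dstep false) hsub hsub'
        (by simpa using hlen) (by simpa using hlen') htail
      exact ⟨by rw [hr], by rw [hhead, ht]⟩
    · rw [ins_cons, ins_cons, if_neg hl, if_neg hl] at heq
      rw [List.cons.injEq] at heq
      obtain ⟨rfl, heq2⟩ := heq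
      have hcnt : ∀ s : List Bool, (hts h (b :: s)).count l = (hts (h + dstep b) s).count l := by
        intro s
        rw [hts_cons, List.count_cons]
        simp [hl]
      rw [hcnt] at hlen
      rw [hcnt] at hlen'
      obtain ⟨hr, ht⟩ := ins_inj l r r' cs cs' (h + dstep b) hsub hsub' hlen hlen' heq2
      exact ⟨by rw [hr], ht⟩

/- ## stripping the top level -/

def strip (l : ℤ) : ℤ → List Bool → List Bool
  | _, [] => []
  | h, b :: rest =>
      if h = l ∧ b = true then strip l l rest.tail
      else b :: strip l (h + dstep b) rest
  termination_by _ p => p.length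
  decreasing_by
  · simp [List.length_tail]
  · simp

def counts (l : ℤ) : ℤ → List Bool → List ℕ
  | h, [] => if h = l then [0] else []
  | h, b :: rest =>
      if h = l then
        (if b = true then (counts l l rest.tail).modifyHead (· + 1)
         else 0 :: counts l (h + dstep b) rest)
      else counts l (h + dstep b) rest
  termination_by _ p => p.length
  decreasing_by
  · simp [List.length_tail]
  · simp
  · simp

lemma strip_nil (l h : ℤ) : strip l h [] = [] := by simp [strip]

lemma strip_cons (l h : ℤ) (b : Bool) (rest : List Bool) :
    strip l h (b :: rest) =
      if h = l ∧ b = true then strip l l rest.tail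
      else b :: strip l (h + dstep b) rest := by
  rw [strip]

lemma counts_nil (l h : ℤ) : counts l h [] = if h = l then [0] else [] := by simp [counts]

lemma counts_cons (l h : ℤ) (b : Bool) (rest : List Bool) :
    counts l h (b :: rest) =
      if h = l then
        (if b = true then (counts l l rest.tail).modifyHead (· + 1)
         else 0 :: counts l (h + dstep b) rest)
      else counts l (h + dstep b) rest := by
  rw [counts]

lemma counts_ne_nil (l : ℤ) : ∀ (N : ℕ) (p : List Bool), p.length ≤ N → counts l l p ≠ [] := by
  intro N
  induction N with
  | zero =>
    intro p hp
    have hp0 : p = [] := List.length_eq_zero_iff.1 (by omega)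
    subst hp0
    rw [counts_nil, if_pos rfl]
    simp
  | succ N ih =>
    intro p hp
    rcases p with _ | ⟨b, rest⟩
    · rw [counts_nil, if_pos rfl]; simp
    · rw [counts_cons, if_pos rfl]
      rcases b with _ | _
      · simp
      · rw [if_pos rfl]
        have h1 : counts l l rest.tail ≠ [] := by
          apply ih
          simp only [List.length_cons] at hp
          have := @List.length_tail _ rest
          omega
        rcases hcc : counts l l rest.tail with _ | ⟨c, t⟩
        · exact absurd hcc h1
        · simp

lemma ins_modifyHead (l : ℤ) (cs : List ℕ) (q : List Bool) (hcs : cs ≠ []) :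
    ins l (cs.modifyHead (· + 1)) l q = true :: false :: ins l cs l q := by
  rcases cs with _ | ⟨c, t⟩
  · exact absurd rfl hcs
  rcases q with _ | ⟨b, q⟩
  · rw [ins_nil, ins_nil, if_pos rfl, if_pos rfl]
    simp [List.modifyHead]
  · rw [ins_cons, ins_cons, if_pos rfl, if_pos rfl]
    simp [List.modifyHead]

lemma strip_spec (l : ℤ) (hl0 : 0 ≤ l) : ∀ (N : ℕ) (p : List Bool) (h : ℤ), p.length ≤ N →
    (∀ x ∈ hts h p, 0 ≤ x ∧ x ≤ l + 1) → h + wsum p ≤ l → h ≤ l →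
    (∀ x ∈ hts h (strip l h p), 0 ≤ x ∧ x ≤ l) ∧
    (counts l h p).length = (hts h (strip l h p)).count l ∧
    ins l (counts l h p) h (strip l h p) = p := by
  intro N
  induction N with
  | zero =>
    intro p h hp hbd hend hhl
    have hp0 : p = [] := List.length_eq_zero_iff.1 (by omega)
    subst hp0
    rw [strip_nil, counts_nil]
    refine ⟨?_, ?_, ?_⟩
    · intro x hx
      simp at hx
      exact ⟨by rw [hx]; exact (hbd h (mem_hts_self _ _)).1, by rw [hx]; exact hhl⟩
    · simp only [hts_nil, List.count_cons, List.count_nil, beq_iff_eq]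
      split_ifs <;> simp_all
    · split_ifs with hl
      · rw [ins_nil, if_pos hl]; simp
      · rw [ins_nil, if_neg hl]
  | succ N ih =>
    intro p h hp hbd hend hhl
    rcases p with _ | ⟨b, rest⟩
    · -- nil again
      rw [strip_nil, counts_nil]
      refine ⟨?_, ?_, ?_⟩
      · intro x hx
        simp at hx
        exact ⟨by rw [hx]; exact (hbd h (mem_hts_self _ _)).1, by rw [hx]; exact hhl⟩
      · simp only [hts_nil, List.count_cons, List.count_nil, beq_iff_eq]
        split_ifs <;> simp_all
      · split_ifs with hl
        · rw [ins_nil, if_pos hl]; simp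
        · rw [ins_nil, if_neg hl]
    · simp only [List.length_cons] at hp
      by_cases hl : h = l
      · rcases b with _ | _
        · -- b = false : a real step down from level l
          rw [strip_cons, if_neg (by simp), counts_cons, if_pos hl, if_neg (by simp)]
          have hbd' : ∀ x ∈ hts (h + dstep false) rest, 0 ≤ x ∧ x ≤ l + 1 := fun x hx =>
            hbd x (by rw [hts_cons]; exact List.mem_cons_of_mem _ hx)
          have hend' : (h + dstep false) + wsum rest ≤ l := by
            rw [wsum_cons] at hend; omega
          have hhl' : h + dstep false ≤ l := by simp [dstep]; omega
          obtain ⟨g1, g2, g3⟩ := ih rest (h + dstep false) (by omega) hbd' hend' hhl'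
          refine ⟨?_, ?_, ?_⟩
          · intro x hx
            rw [hts_cons, List.mem_cons] at hx
            rcases hx with rfl | hx
            · exact ⟨(hbd x (mem_hts_self _ _)).1, hhl⟩
            · exact g1 x hx
          · rw [hts_cons, List.count_cons, List.length_cons, g2]
            simp [hl]
          · rw [ins_cons, if_pos hl]
            simp only [List.headI, List.tail, pk_zero, List.nil_append]
            rw [g3]
        · -- b = true : a peak at the top level
          have hrest : ∃ rest', rest = false :: rest' := by
            rcases rest with _ | ⟨b2, rest'⟩
            · exfalso
              rw [wsum_cons, wsum_nil] at hend
              simp [dstep] at hend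
              omega
            · rcases b2 with _ | _
              · exact ⟨rest', rfl⟩
              · exfalso
                have hm : h + dstep true + dstep true ∈ hts h (true :: true :: rest') := by
                  rw [hts_cons, hts_cons]
                  exact List.mem_cons_of_mem _ (List.mem_cons_of_mem _ (mem_hts_self _ _))
                have := (hbd _ hm).2
                simp [dstep] at this
                omega
          obtain ⟨rest', rfl⟩ := hrest
          rw [strip_cons, if_pos ⟨hl, rfl⟩, counts_cons, if_pos hl, if_pos rfl]
          simp only [List.tail]
          have he : h + dstep true + dstep false = l := by simp [dstep]; omega
          have hbd' : ∀ x ∈ hts l rest', 0 ≤ x ∧ x ≤ l + 1 := by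
            intro x hx
            apply hbd
            rw [hts_cons, hts_cons, he]
            exact List.mem_cons_of_mem _ (List.mem_cons_of_mem _ hx)
          have hend' : l + wsum rest' ≤ l := by
            rw [wsum_cons, wsum_cons] at hend
            simp [dstep] at hend
            omega
          obtain ⟨g1, g2, g3⟩ := ih rest' l (by simp only [List.length_cons] at hp; omega) hbd' hend' le_rfl
          rw [hl]
          refine ⟨g1, ?_, ?_⟩
          · rcases hcc : counts l l rest' with _ | ⟨c, t⟩
            · exact absurd hcc (counts_ne_nil l rest'.length rest' le_rfl)
            · rw [hcc] at g2
              simpa using g2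
          · rw [ins_modifyHead l _ _ (counts_ne_nil l rest'.length rest' le_rfl), g3]
      · -- h ≠ l
        rw [strip_cons, if_neg (by tauto), counts_cons, if_neg hl]
        have hbd' : ∀ x ∈ hts (h + dstep b) rest, 0 ≤ x ∧ x ≤ l + 1 := fun x hx =>
          hbd x (by rw [hts_cons]; exact List.mem_cons_of_mem _ hx)
        have hend' : (h + dstep b) + wsum rest ≤ l := by
          rw [wsum_cons] at hend; omega
        have hhl' : h + dstep b ≤ l := by
          rcases b <;> simp [dstep] <;> omega
        obtain ⟨g1, g2, g3⟩ := ih rest (h + dstep b) (by omega) hbd' hend' hhl'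
        refine ⟨?_, ?_, ?_⟩
        · intro x hx
          rw [hts_cons, List.mem_cons] at hx
          rcases hx with rfl | hx
          · exact ⟨(hbd x (mem_hts_self _ _)).1, hhl⟩
          · exact g1 x hx
        · rw [hts_cons, List.count_cons, g2]
          simp only [beq_iff_eq]
          rw [if_neg (fun hc => hl hc)]
          simp
        · rw [ins_cons, if_neg hl, g3]

/- ## stars and bars -/

def Lset : ℕ → ℕ → Finset (List ℕ)
  | 0, 0 => {[]}
  | 0, _ + 1 => ∅
  | V + 1, n => (Finset.range (n + 1)).biUnion (fun j => (Lset V (n - j)).image (List.cons j))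

lemma mem_Lset : ∀ (V n : ℕ) (cs : List ℕ),
    cs ∈ Lset V n ↔ cs.length = V ∧ cs.sum = n
  | 0, 0, cs => by
    simp only [Lset, Finset.mem_singleton]
    constructor
    · rintro rfl; simp
    · rintro ⟨h1, _⟩; exact List.length_eq_zero_iff.1 h1
  | 0, n + 1, cs => by
    simp only [Lset, Finset.notMem_empty, false_iff, not_and]
    intro h1
    rw [List.length_eq_zero_iff.1 h1]
    simp
  | V + 1, n, cs => by
    simp only [Lset, Finset.mem_biUnion, Finset.mem_range, Finset.mem_image]
    constructor
    · rintro ⟨j, hj, t, ht, rfl⟩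
      rw [mem_Lset V (n - j) t] at ht
      simp [ht.1, ht.2]
      omega
    · rintro ⟨h1, h2⟩
      rcases cs with _ | ⟨c, t⟩
      · simp at h1
      · refine ⟨c, by simp at h2; omega, t, ?_, rfl⟩
        rw [mem_Lset V (n - c) t]
        simp at h1 h2
        constructor
        · omega
        · omega

lemma sum_choose_sb (V : ℕ) : ∀ n : ℕ,
    ∑ m ∈ Finset.range (n + 1), (V + m - 1).choose m = (V + n).choose n := by
  intro n
  induction n with
  | zero => simp
  | succ n ih =>
    rw [Finset.sum_range_succ, ih]
    have h1 : V + (n + 1) - 1 = V + n := by omega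
    rw [h1]
    have h2 : (V + (n + 1)).choose (n + 1) = (V + n).choose n + (V + n).choose (n + 1) := by
      rw [show V + (n + 1) = (V + n) + 1 from by omega]
      rw [Nat.choose_succ_succ']
    omega

lemma card_Lset : ∀ (V n : ℕ), (Lset V n).card = (V + n - 1).choose n
  | 0, 0 => by simp [Lset]
  | 0, n + 1 => by
    have h0 : (0 + (n + 1) - 1).choose (n + 1) = 0 := Nat.choose_eq_zero_of_lt (by omega)
    simp only [Lset, Finset.card_empty, h0]
  | V + 1, n => by
    rw [Lset, Finset.card_biUnion]
    · have h1 : ∀ j ∈ Finset.range (n + 1),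
          ((Lset V (n - j)).image (List.cons j)).card = (V + (n - j) - 1).choose (n - j) := by
        intro j _
        rw [Finset.card_image_of_injective _ (fun a b h => by injection h), card_Lset V (n - j)]
      rw [Finset.sum_congr rfl h1]
      have h2 : ∑ j ∈ Finset.range (n + 1), (V + (n - j) - 1).choose (n - j)
          = ∑ m ∈ Finset.range (n + 1), (V + m - 1).choose m := by
        rw [← Finset.sum_range_reflect]
        apply Finset.sum_congr rfl
        intro j hj
        rw [Finset.mem_range] at hj
        congr 1 <;> omega
      rw [h2, sum_choose_sb]
      congr 1
      omega
    · intro a _ b _ hab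
      simp only [Finset.disjoint_left, Finset.mem_image]
      rintro x ⟨t, _, rfl⟩ ⟨t', _, hx⟩
      injection hx with h1 _
      exact hab h1.symm

/- ## bounds from vanishing frame -/

lemma hts_le_of_frame_zero {p : List Bool} (hp : IsDyck p) (T : ℕ)
    (hzz : ∀ k, k > T → frame p k = 0) :
    ∀ x ∈ hts 0 p, 0 ≤ x ∧ x ≤ (T : ℤ) := by
  intro x hx
  have h0 : 0 ≤ x := dyck_nonneg_mem hp hx
  refine ⟨h0, ?_⟩
  by_contra hgt
  push_neg at hgt
  have hxt : ((x.toNat : ℤ)) = x := Int.toNat_of_nonneg h0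
  have hcnt : (hts 0 p).count ((x.toNat : ℤ)) ≠ 0 := by
    rw [hxt]
    exact fun hc => (List.count_eq_zero.1 hc) hx
  have := hzz x.toNat (by omega)
  rw [frame_eq_count] at this
  exact hcnt this

lemma ups_top_zero {p : List Bool} (T : ℕ) (hzz : frame p (T + 1) = 0) :
    ups (T : ℤ) 0 p = 0 := by
  apply ups_eq_zero_of_not_mem_succ
  intro hmem
  rw [frame_eq_count] at hzz
  have : ((T : ℤ) + 1) = (((T + 1 : ℕ)) : ℤ) := by push_cast; ring
  rw [this] at hmem
  exact (List.count_eq_zero.1 hzz) hmem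

lemma mem_hts_of_frame_ne_zero {p : List Bool} (k : ℕ) (hk : frame p k ≠ 0) :
    ((k : ℤ)) ∈ hts 0 p := by
  rw [frame_eq_count] at hk
  by_contra hmem
  exact hk (List.count_eq_zero.2 hmem)

/- ## the empty-path characterization -/

lemma dyck_frame_eq_nil {p : List Bool} (hp : IsDyck p) (h1 : frame p 1 = 0) : p = [] := by
  rcases p with _ | ⟨b, rest⟩
  · rfl
  exfalso
  have hb : b = true := by
    have h2 := hp.2 1
    cases b
    · simp [dheight, dstep] at h2
    · rfl
  subst hb
  have hmem : (1 : ℤ) ∈ hts 0 (true :: rest) := by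
    rw [hts_cons]
    have he : (0 : ℤ) + dstep true = 1 := by simp [dstep]
    rw [he]
    exact List.mem_cons_of_mem _ (mem_hts_self _ _)
  have h3 := frame_eq_count (true :: rest) 1
  rw [h1] at h3
  rw [Nat.cast_one] at h3
  exact (List.count_eq_zero.1 h3.symm) hmem

/- ## main counting lemma -/

lemma main_count : ∀ (f : ℕ) (I : ℕ → ℕ), Admissible I → I f ≠ 0 → (∀ k, k > f → I k = 0) →
    Set.ncard {p : List Bool | IsDyck p ∧ frame p = I} =
      ∏ k ∈ Finset.Icc 1 f, Nat.choose (I k - 1) (((I k : ℤ) - jSeq I k - 1).toNat) := by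
  intro f
  induction f with
  | zero =>
    intro I hI hf hz
    obtain ⟨p0, hp0, hfr⟩ := hI
    subst hfr
    have hnil : p0 = [] := dyck_frame_eq_nil hp0 (hz 1 (by omega))
    subst hnil
    have hset : {p : List Bool | IsDyck p ∧ frame p = frame []} = {[]} := by
      ext p
      simp only [Set.mem_setOf_eq, Set.mem_singleton_iff]
      constructor
      · rintro ⟨hp, hfp⟩
        apply dyck_frame_eq_nil hp
        rw [hfp]
        exact hz 1 (by omega)
      · rintro rfl
        exact ⟨hp0, rfl⟩
    rw [hset, Set.ncard_singleton, Finset.Icc_eq_empty (by omega), Finset.prod_empty]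
  | succ f ihf =>
    intro I hI hf hz
    obtain ⟨p0, hp0, hfr⟩ := hI
    subst hfr
    have hl0 : (0 : ℤ) ≤ (f : ℤ) := Int.natCast_nonneg f
    have hw0 : wsum p0 = 0 := ((isDyck_iff p0).1 hp0).1
    set I' : ℕ → ℕ := fun k =>
      if k = f then frame p0 f - frame p0 (f + 1)
      else if k = f + 1 then 0 else frame p0 k with hI'
    have hI'f : I' f = frame p0 f - frame p0 (f + 1) := by simp [hI']
    have hI'f1 : I' (f + 1) = 0 := by simp [hI']
    have hI'k : ∀ k, k ≠ f → k ≠ f + 1 → I' k = frame p0 k := by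
      intro k h1 h2
      simp [hI', h1, h2]
    -- bounds for members
    have hbd : ∀ p : List Bool, IsDyck p → frame p = frame p0 →
        ∀ x ∈ hts 0 p, 0 ≤ x ∧ x ≤ (f : ℤ) + 1 := by
      intro p hp hfp
      have h1 := hts_le_of_frame_zero hp (f + 1) (fun k hk => by rw [hfp]; exact hz k hk)
      intro x hx
      have h2 := h1 x hx
      push_cast at h2
      exact ⟨h2.1, by omega⟩
    -- stripping data for members
    have key : ∀ p : List Bool, IsDyck p → frame p = frame p0 →
        IsDyck (strip (f : ℤ) 0 p)
        ∧ frame (strip (f : ℤ) 0 p) = I'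
        ∧ (counts (f : ℤ) 0 p).length = frame p0 f - frame p0 (f + 1)
        ∧ (counts (f : ℤ) 0 p).sum = frame p0 (f + 1)
        ∧ ins (f : ℤ) (counts (f : ℤ) 0 p) 0 (strip (f : ℤ) 0 p) = p := by
      intro p hp hfp
      have hwp : wsum p = 0 := ((isDyck_iff p).1 hp).1
      obtain ⟨g1, g2, g3⟩ := strip_spec (f : ℤ) hl0 p.length p 0 le_rfl (hbd p hp hfp)
        (by rw [hwp]; omega) hl0
      have hwq : wsum (strip (f : ℤ) 0 p) = 0 := by
        have h1 := wsum_ins (f : ℤ) (strip (f : ℤ) 0 p) (counts (f : ℤ) 0 p) 0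
        rw [g3] at h1
        omega
      have hdq : IsDyck (strip (f : ℤ) 0 p) :=
        (isDyck_iff _).2 ⟨hwq, fun x hx => (g1 x hx).1⟩
      have hcnt : ∀ m : ℤ, (hts 0 p).count m = (hts 0 (strip (f : ℤ) 0 p)).count m
          + (if m = (f : ℤ) ∨ m = (f : ℤ) + 1 then (counts (f : ℤ) 0 p).sum else 0) := by
        intro m
        have h1 := count_hts_ins (f : ℤ) (strip (f : ℤ) 0 p) (counts (f : ℤ) 0 p) 0 m
        rw [g3, ← g2, List.take_length] at h1
        exact h1
      have hcnt_top : (hts 0 (strip (f : ℤ) 0 p)).count ((f : ℤ) + 1) = 0 :=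
        List.count_eq_zero.2 (fun hmem => by have := (g1 _ hmem).2; omega)
      have hsum : (counts (f : ℤ) 0 p).sum = frame p0 (f + 1) := by
        have h1 := hcnt ((f : ℤ) + 1)
        rw [hcnt_top, if_pos (Or.inr rfl)] at h1
        have h2 := frame_eq_count p (f + 1)
        rw [hfp] at h2
        push_cast at h2
        omega
      have hfq : frame (strip (f : ℤ) 0 p) = I' := by
        funext k
        have h1 := hcnt (k : ℤ)
        have h2 := frame_eq_count p k
        rw [hfp] at h2
        have h3 := frame_eq_count (strip (f : ℤ) 0 p) k
        rw [hsum] at h1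
        by_cases hkf : k = f
        · subst hkf
          rw [if_pos (Or.inl rfl)] at h1
          rw [hI'f]
          omega
        · by_cases hkf1 : k = f + 1
          · subst hkf1
            rw [if_pos (Or.inr (by push_cast; ring))] at h1
            rw [hI'f1]
            push_cast at h1 h2 h3 ⊢
            omega
          · rw [if_neg (by omega)] at h1
            rw [hI'k k hkf hkf1]
            omega
      refine ⟨hdq, hfq, ?_, hsum, g3⟩
      have h4 := frame_eq_count (strip (f : ℤ) 0 p) f
      rw [hfq, hI'f] at h4
      rw [g2, ← h4]
    -- strip data for the witness
    obtain ⟨hdq0, hfq0, hlen0, hsum0, hins0⟩ := key p0 hp0 rfl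
    -- numeric facts
    have htop : ups ((f : ℤ) + 1) 0 p0 = 0 := by
      have h1 := ups_top_zero (f + 1) (hz (f + 2) (by omega))
      push_cast at h1
      exact h1
    have hupsf : ups ((f : ℤ)) 0 p0 = frame p0 (f + 1) := by
      have h1 := frame_succ_eq hp0 f
      rw [htop] at h1
      omega
    have hV : frame p0 (f + 1) < frame p0 f := by
      rcases f with _ | m
      · have h0 := frame_zero_eq hp0
        simp only [Nat.cast_zero, zero_add] at hupsf h0 ⊢
        omega
      · have hfs := frame_succ_eq hp0 m
        have hpos : 0 < ups ((m : ℤ)) 0 p0 := by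
          apply ups_pos (m : ℤ) p0 0 (((m + 2 : ℕ)) : ℤ) (by positivity)
          · have := mem_hts_of_frame_ne_zero (m + 2) hf
            exact this
          · push_cast; omega
        push_cast at hfs hupsf
        omega
    -- induction hypothesis
    have hAdm' : Admissible I' := ⟨strip (f : ℤ) 0 p0, hdq0, hfq0⟩
    have hI'fne : I' f ≠ 0 := by rw [hI'f]; omega
    have hz' : ∀ k, k > f → I' k = 0 := by
      intro k hk
      by_cases hk1 : k = f + 1
      · subst hk1; exact hI'f1
      · rw [hI'k k (by omega) hk1]
        exact hz k (by omega)
    have hIH := ihf I' hAdm' hI'fne hz'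
    -- the bijection
    have hqfacts : ∀ q : List Bool, IsDyck q → frame q = I' →
        (∀ x ∈ hts 0 q, 0 ≤ x ∧ x ≤ (f : ℤ))
        ∧ (hts 0 q).count ((f : ℤ)) = frame p0 f - frame p0 (f + 1) := by
      intro q hq hfq
      constructor
      · exact hts_le_of_frame_zero hq f (fun k hk => by rw [hfq]; exact hz' k hk)
      · have h1 := frame_eq_count q f
        rw [hfq, hI'f] at h1
        exact h1.symm
    have hbij : Set.BijOn (fun x : List Bool × List ℕ => ins (f : ℤ) x.2 0 x.1)
        ({q | IsDyck q ∧ frame q = I'} ×ˢ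
          {cs : List ℕ | cs.length = frame p0 f - frame p0 (f + 1) ∧ cs.sum = frame p0 (f + 1)})
        {p | IsDyck p ∧ frame p = frame p0} := by
      refine ⟨?_, ?_, ?_⟩
      · rintro ⟨q, cs⟩ ⟨⟨hq, hfq⟩, hlen, hsum⟩
        obtain ⟨hbq, hcq⟩ := hqfacts q hq hfq
        have htake : cs.take ((hts 0 q).count ((f : ℤ))) = cs := by
          rw [hcq, ← hlen, List.take_length]
        have hcnti : ∀ m : ℤ, (hts 0 (ins (f : ℤ) cs 0 q)).count m = (hts 0 q).count m
            + (if m = (f : ℤ) ∨ m = (f : ℤ) + 1 then frame p0 (f + 1) else 0) := by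
          intro m
          have h1 := count_hts_ins (f : ℤ) q cs 0 m
          rw [htake, hsum] at h1
          exact h1
        have hwi : wsum (ins (f : ℤ) cs 0 q) = 0 := by
          rw [wsum_ins]
          exact ((isDyck_iff q).1 hq).1
        have hdi : IsDyck (ins (f : ℤ) cs 0 q) := by
          rw [isDyck_iff]
          refine ⟨hwi, ?_⟩
          intro x hx
          have hcx : (hts 0 (ins (f : ℤ) cs 0 q)).count x ≠ 0 :=
            fun hc => (List.count_eq_zero.1 hc) hx
          rw [hcnti x] at hcx
          by_cases hxm : x = (f : ℤ) ∨ x = (f : ℤ) + 1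
          · rcases hxm with rfl | rfl <;> omega
          · rw [if_neg hxm, add_zero] at hcx
            exact (hbq x (List.count_pos_iff.1 (by omega))).1
        refine ⟨hdi, ?_⟩
        funext k
        have h1 := frame_eq_count (ins (f : ℤ) cs 0 q) k
        have h2 := frame_eq_count q k
        rw [hfq] at h2
        rw [h1, hcnti (k : ℤ)]
        by_cases hkf : k = f
        · subst hkf
          rw [if_pos (Or.inl rfl), ← h2, hI'f]
          omega
        · by_cases hkf1 : k = f + 1
          · subst hkf1
            rw [if_pos (Or.inr (by push_cast; ring)), ← h2, hI'f1]
            omega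
          · rw [if_neg (by omega), add_zero, ← h2, hI'k k hkf hkf1]
      · rintro ⟨q, cs⟩ ⟨⟨hq, hfq⟩, hlen, hsum⟩ ⟨q', cs'⟩ ⟨⟨hq', hfq'⟩, hlen', hsum'⟩ heq
        obtain ⟨hbq, hcq⟩ := hqfacts q hq hfq
        obtain ⟨hbq', hcq'⟩ := hqfacts q' hq' hfq'
        obtain ⟨e1, e2⟩ := ins_inj (f : ℤ) q q' cs cs' 0
          (fun x hx => (hbq x hx).2) (fun x hx => (hbq' x hx).2)
          (by rw [hcq, hlen]) (by rw [hcq', hlen']) heq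
        simp [e1, e2]
      · rintro p ⟨hp, hfp⟩
        obtain ⟨hdq, hfq, hlen, hsum, hins⟩ := key p hp hfp
        exact ⟨(strip (f : ℤ) 0 p, counts (f : ℤ) 0 p), ⟨⟨hdq, hfq⟩, hlen, hsum⟩, hins⟩
    -- cardinalities
    have hS : {p : List Bool | IsDyck p ∧ frame p = frame p0}.ncard
        = ({q | IsDyck q ∧ frame q = I'} ×ˢ
            {cs : List ℕ | cs.length = frame p0 f - frame p0 (f + 1)
              ∧ cs.sum = frame p0 (f + 1)}).ncard := by
      rw [← Nat.card_coe_set_eq, ← Nat.card_coe_set_eq]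
      exact (Nat.card_congr (Set.BijOn.equiv _ hbij)).symm
    have hprod : ({q | IsDyck q ∧ frame q = I'} ×ˢ
            {cs : List ℕ | cs.length = frame p0 f - frame p0 (f + 1)
              ∧ cs.sum = frame p0 (f + 1)}).ncard
        = {q | IsDyck q ∧ frame q = I'}.ncard *
          {cs : List ℕ | cs.length = frame p0 f - frame p0 (f + 1)
            ∧ cs.sum = frame p0 (f + 1)}.ncard := by
      rw [← Nat.card_coe_set_eq, ← Nat.card_coe_set_eq, ← Nat.card_coe_set_eq]
      rw [Nat.card_congr (Equiv.Set.prod _ _)]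
      exact Nat.card_prod _ _
    have hCs : {cs : List ℕ | cs.length = frame p0 f - frame p0 (f + 1)
            ∧ cs.sum = frame p0 (f + 1)}.ncard
        = (frame p0 f - 1).choose (frame p0 (f + 1)) := by
      have hset : {cs : List ℕ | cs.length = frame p0 f - frame p0 (f + 1)
            ∧ cs.sum = frame p0 (f + 1)}
          = ↑(Lset (frame p0 f - frame p0 (f + 1)) (frame p0 (f + 1))) := by
        ext cs
        rw [Set.mem_setOf_eq, Finset.mem_coe, mem_Lset]
      rw [hset, Set.ncard_coe_finset, card_Lset]
      congr 1
      omega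
    rw [hS, hprod, hCs, hIH]
    -- final product manipulation
    have gtop : (frame p0 (f + 1) - 1).choose
        (((frame p0 (f + 1) : ℤ) - jSeq (frame p0) (f + 1) - 1).toNat) = 1 := by
      rw [toNat_term hp0 f, htop, Nat.choose_zero_right]
    rw [Finset.prod_Icc_succ_top (show 1 ≤ f + 1 by omega), gtop, mul_one]
    rcases f with _ | m
    · rw [Finset.Icc_eq_empty (by omega)]
      simp only [Finset.prod_empty, one_mul]
      have h0 := frame_zero_eq hp0
      simp only [Nat.cast_zero, zero_add] at hupsf h0 ⊢
      rw [show frame p0 0 - 1 = frame p0 1 from by omega]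
      exact Nat.choose_self _
    · rw [Finset.prod_Icc_succ_top (show 1 ≤ m + 1 by omega),
        Finset.prod_Icc_succ_top (show 1 ≤ m + 1 by omega)]
      have hcong : ∏ k ∈ Finset.Icc 1 m,
            (I' k - 1).choose (((I' k : ℤ) - jSeq I' k - 1).toNat)
          = ∏ k ∈ Finset.Icc 1 m,
            (frame p0 k - 1).choose (((frame p0 k : ℤ) - jSeq (frame p0) k - 1).toNat) := by
        apply Finset.prod_congr rfl
        intro k hk
        rw [Finset.mem_Icc] at hk
        have hik : I' k = frame p0 k := hI'k k (by omega) (by omega)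
        have hjk : jSeq I' k = jSeq (frame p0) k :=
          jSeq_congr _ _ k (fun t ht => hI'k t (by omega) (by omega))
        rw [hik, hjk]
      have g'f : (I' (m + 1) - 1).choose
          (((I' (m + 1) : ℤ) - jSeq I' (m + 1) - 1).toNat) = 1 := by
        rw [← hfq0, toNat_term hdq0 m]
        have hq0top : ups ((m : ℤ) + 1) 0 (strip ((m + 1 : ℕ) : ℤ) 0 p0) = 0 := by
          have h1 := ups_top_zero (m + 1) (by rw [hfq0]; exact hz' (m + 2) (by omega))
          push_cast at h1
          exact h1
        rw [hq0top, Nat.choose_zero_right]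
      have gf : (frame p0 (m + 1) - 1).choose
          (((frame p0 (m + 1) : ℤ) - jSeq (frame p0) (m + 1) - 1).toNat)
          = (frame p0 (m + 1) - 1).choose (frame p0 (m + 2)) := by
        rw [toNat_term hp0 m]
        congr 1
      rw [hcong, g'f, gf, mul_one]

/-- The number of Dyck paths with admissible frame (i_0,...,i_f,0,...) equals
C(i_1-1, i_1-j_1-1) · C(i_2-1, i_2-j_2-1) ··· C(i_f-1, i_f-j_f-1). -/
theorem stmt18 (I : ℕ → ℕ) (f : ℕ) (hI : Admissible I) (hf : I f ≠ 0)
    (hz : ∀ k > f, I k = 0) :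
    Set.ncard {p : List Bool | IsDyck p ∧ frame p = I} =
      ∏ k ∈ Finset.Icc 1 f, Nat.choose (I k - 1) (((I k : ℤ) - jSeq I k - 1).toNat) := by
  exact main_count f I hI hf (fun k hk => hz k hk)
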